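/- Under the two-sided kernel domination condition a P_k(A) ≤ Q_k(x,A) ≤ b P_k(A) (0 < a ≤ 1 ≤ b) for a Markov chain (ξ_k), define the operators T_k(h)(x) = ∫ h(y) exp(i u g_k(y)) Q_k(x, dy) on bounded complex measurable functions. Then for every k ≥ 2 and u ∈ ℝ, the composition satisfies ‖T_{k-1} ∘ T_k‖² ≤ 1 - (γ/2)(1 - |E(exp(i u X_{k-1}))|²), where γ = a⁴/b, X_{k-1} = g_{k-1}(ξ_{k-1}), and ‖T‖ = sup_{|h|_∞ ≤ 1} |T(h)|_∞ (with the sup-norm taken P_{k-2}-essentially). -/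

import Mathlib

open MeasureTheory

namespace OpCompAux

variable {S : Type*} [MeasurableSpace S]

lemma integrable_of_bdd {μ : Measure S} [IsFiniteMeasure μ] {f : S → ℂ}
    (hf : AEStronglyMeasurable f μ) {C : ℝ} (hC : ∀ z, ‖f z‖ ≤ C) :
    Integrable f μ :=
  ⟨hf, HasFiniteIntegral.of_bounded (C := C) (Filter.Eventually.of_forall fun z => by
    simpa using hC z)⟩

lemma integrable_of_bdd_real {μ : Measure S} [IsFiniteMeasure μ] {f : S → ℝ}
    (hf : AEStronglyMeasurable f μ) {C : ℝ} (hC : ∀ z, |f z| ≤ C) :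
    Integrable f μ :=
  ⟨hf, HasFiniteIntegral.of_bounded (C := C) (Filter.Eventually.of_forall fun z => by
    simpa using hC z)⟩

/-- Key real-valued estimate under the one-sided domination `a·ν ≤ μ`. -/
lemma real_key {μ ν : Measure S} [IsProbabilityMeasure μ] [IsProbabilityMeasure ν]
    {a : ℝ} (ha : 0 ≤ a)
    (hdom : ∀ A : Set S, MeasurableSet A → a * (ν A).toReal ≤ (μ A).toReal)
    {ψ : S → ℝ} (hψ : Measurable ψ) (hψ1 : ∀ z, |ψ z| ≤ 1) :
    ∫ z, ψ z ∂μ - a * ∫ z, ψ z ∂ν ≤ 1 - a := by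
  have hintμ : Integrable ψ μ :=
    integrable_of_bdd_real hψ.aestronglyMeasurable hψ1
  have hintν : Integrable ψ ν :=
    integrable_of_bdd_real hψ.aestronglyMeasurable hψ1
  have hle : (ENNReal.ofReal a) • ν ≤ μ := by
    refine Measure.le_iff.2 fun A hA => ?_
    have h1 : ((ENNReal.ofReal a) • ν) A = ENNReal.ofReal a * ν A := by
      simp [Measure.smul_apply]
    rw [h1]
    have hν : ν A ≠ ⊤ := measure_ne_top ν A
    have hμ : μ A ≠ ⊤ := measure_ne_top μ A
    have hfin : ENNReal.ofReal a * ν A ≠ ⊤ := ENNReal.mul_ne_top (by simp) hν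
    rw [← ENNReal.toReal_le_toReal hfin hμ]
    have : (ENNReal.ofReal a * ν A).toReal = a * (ν A).toReal := by
      rw [ENNReal.toReal_mul, ENNReal.toReal_ofReal ha]
    rw [this]
    exact hdom A hA
  have h2 : ∫ z, (1 - ψ z) ∂((ENNReal.ofReal a) • ν) ≤ ∫ z, (1 - ψ z) ∂μ := by
    refine integral_mono_measure hle ?_ ((integrable_const 1).sub hintμ)
    exact Filter.Eventually.of_forall fun z => by
      simp only [Pi.zero_apply]
      have := abs_le.1 (hψ1 z); linarith [this.2]
  have h3 : ∫ z, (1 - ψ z) ∂((ENNReal.ofReal a) • ν) = a * ∫ z, (1 - ψ z) ∂ν := by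
    rw [integral_smul_measure, ENNReal.toReal_ofReal ha, smul_eq_mul]
  have h4 : ∫ z, (1 - ψ z) ∂μ = 1 - ∫ z, ψ z ∂μ := by
    rw [integral_sub (integrable_const 1) hintμ]; simp
  have h5 : ∫ z, (1 - ψ z) ∂ν = 1 - ∫ z, ψ z ∂ν := by
    rw [integral_sub (integrable_const 1) hintν]; simp
  rw [h3, h4, h5] at h2
  nlinarith

/-- Core lemma: `|∫ G dμ − a ∫ G dν| ≤ 1 − a` under the domination, for `|G| ≤ 1`. -/
lemma abs_integral_sub_le {μ ν : Measure S} [IsProbabilityMeasure μ] [IsProbabilityMeasure ν]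
    {a : ℝ} (ha : 0 ≤ a)
    (hdom : ∀ A : Set S, MeasurableSet A → a * (ν A).toReal ≤ (μ A).toReal)
    {G : S → ℂ} (hGm : Measurable G) (hG1 : ∀ z, ‖G z‖ ≤ 1) :
    ‖∫ z, G z ∂μ - (a : ℂ) * ∫ z, G z ∂ν‖ ≤ 1 - a := by
  have ha1 : a ≤ 1 := by
    have := hdom Set.univ MeasurableSet.univ
    simpa using this
  set w : ℂ := ∫ z, G z ∂μ - (a : ℂ) * ∫ z, G z ∂ν with hw
  rcases eq_or_ne w 0 with h0 | h0
  · rw [h0]; simpa using sub_nonneg.2 ha1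
  · set c : ℂ := (starRingEnd ℂ) w / (‖w‖ : ℂ) with hc
    have habsw : (‖w‖ : ℝ) ≠ 0 := norm_ne_zero_iff.mpr h0
    have hcabs : ‖c‖ = 1 := by
      rw [hc, norm_div, Complex.norm_conj, Complex.norm_real, norm_norm, div_self habsw]
    have hcw : (c * w).re = ‖w‖ := by
      have : c * w = ((‖w‖ : ℝ) : ℂ) := by
        rw [hc, div_mul_eq_mul_div, mul_comm ((starRingEnd ℂ) w) w, Complex.mul_conj,
          Complex.normSq_eq_norm_sq]
        rw [div_eq_iff (by exact_mod_cast habsw : ((‖w‖ : ℝ) : ℂ) ≠ 0)]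
        push_cast
        ring
      rw [this, Complex.ofReal_re]
    -- the real function ψ
    set ψ : S → ℝ := fun z => (c * G z).re with hψdef
    have hψm : Measurable ψ := (Complex.measurable_re).comp (measurable_const.mul hGm)
    have hψ1 : ∀ z, |ψ z| ≤ 1 := by
      intro z
      calc |ψ z| ≤ ‖c * G z‖ := Complex.abs_re_le_norm _
        _ = ‖c‖ * ‖G z‖ := norm_mul _ _
        _ ≤ 1 := by rw [hcabs, one_mul]; exact hG1 z
    have hintμ : Integrable (fun z => c * G z) μ :=
      integrable_of_bdd (measurable_const.mul hGm).aestronglyMeasurable (C := 1)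
        (fun z => by rw [norm_mul, hcabs, one_mul]; exact hG1 z)
    have hintν : Integrable (fun z => c * G z) ν :=
      integrable_of_bdd (measurable_const.mul hGm).aestronglyMeasurable (C := 1)
        (fun z => by rw [norm_mul, hcabs, one_mul]; exact hG1 z)
    have hreμ : ∫ z, ψ z ∂μ = (c * ∫ z, G z ∂μ).re := by
      rw [← integral_const_mul]
      have := integral_re (𝕜 := ℂ) (f := fun z => c * G z) (μ := μ) hintμ
      simpa [hψdef] using this
    have hreν : ∫ z, ψ z ∂ν = (c * ∫ z, G z ∂ν).re := by
      rw [← integral_const_mul]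
      have := integral_re (𝕜 := ℂ) (f := fun z => c * G z) (μ := ν) hintν
      simpa [hψdef] using this
    have hkey := real_key ha hdom hψm hψ1
    rw [hreμ, hreν] at hkey
    have hexp : (c * w).re = (c * ∫ z, G z ∂μ).re - a * (c * ∫ z, G z ∂ν).re := by
      have : c * w = c * ∫ z, G z ∂μ - ((a : ℂ)) * (c * ∫ z, G z ∂ν) := by
        rw [hw]; ring
      rw [this]
      simp [Complex.sub_re, Complex.mul_re, Complex.ofReal_re, Complex.ofReal_im]
    rw [← hcw, hexp]
    exact hkey

end OpCompAux

open OpCompAux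

/-- Norm bound for the composition of two Fourier-perturbed transition operators
`T_{k-1} ∘ T_k`, where `T_k(h)(x) = ∫ h(y) exp(iug_k(y)) Q_k(x,dy)`:
`‖T_{k-1} ∘ T_k‖² ≤ 1 - (γ/2)(1 - |f_{k-1}(u)|²)` with `γ = a⁴/b`.
Here `P0, P1, P2` are the marginals at times `k-2, k-1, k`, `Q1, Q2` the transition kernels
from time `k-2` to `k-1` and from `k-1` to `k`, and `g1, g2` the functions `g_{k-1}, g_k`. -/
theorem operator_composition_norm_bound
    {S : Type*} [MeasurableSpace S]
    (P0 P1 P2 : Measure S) [IsProbabilityMeasure P0] [IsProbabilityMeasure P1]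
    [IsProbabilityMeasure P2]
    (Q1 Q2 : ProbabilityTheory.Kernel S S)
    [ProbabilityTheory.IsMarkovKernel Q1] [ProbabilityTheory.IsMarkovKernel Q2]
    (a b : ℝ) (ha : 0 < a) (ha1 : a ≤ 1) (hb1 : 1 ≤ b)
    (S1 : Set S) (hS1meas : MeasurableSet S1) (hS1 : P0 S1 = 1)
    (hdom1 : ∀ x ∈ S1, ∀ A : Set S, MeasurableSet A →
      a * (P1 A).toReal ≤ (Q1 x A).toReal ∧ (Q1 x A).toReal ≤ b * (P1 A).toReal)
    (S2 : Set S) (hS2meas : MeasurableSet S2) (hS2 : P1 S2 = 1)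
    (hdom2 : ∀ y ∈ S2, ∀ A : Set S, MeasurableSet A →
      a * (P2 A).toReal ≤ (Q2 y A).toReal ∧ (Q2 y A).toReal ≤ b * (P2 A).toReal)
    (g1 g2 : S → ℝ) (hg1 : Measurable g1) (hg2 : Measurable g2) (u : ℝ) :
    (sSup {c : ℝ | ∃ h : S → ℂ, Measurable h ∧ (∀ z, ‖h z‖ ≤ 1) ∧
        c = essSup (fun x => ‖
            ∫ y, (∫ z, h z * Complex.exp (u * g2 z * Complex.I) ∂(Q2 y)) *
              Complex.exp (u * g1 y * Complex.I) ∂(Q1 x)‖) P0}) ^ 2 ≤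
      1 - (a ^ 4 / b) / 2 *
        (1 - ‖∫ y, Complex.exp (u * g1 y * Complex.I) ∂P1‖ ^ 2) := by
  -- notation
  set e1 : S → ℂ := fun y => Complex.exp (u * g1 y * Complex.I) with he1
  have he1m : Measurable e1 :=
    Complex.measurable_exp.comp
      (((Complex.measurable_ofReal.comp hg1).const_mul (u : ℂ)).mul_const Complex.I)
  have he1abs : ∀ y, ‖e1 y‖ = 1 := fun y => by
    have : (u : ℂ) * (g1 y : ℂ) * Complex.I = ((u * g1 y : ℝ) : ℂ) * Complex.I := by push_cast; ring
    rw [he1]; simp only [this]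
    exact Complex.norm_exp_ofReal_mul_I _
  set φ : ℂ := ∫ y, e1 y ∂P1 with hφ
  set t : ℝ := ‖φ‖ with ht
  have ht0 : 0 ≤ t := norm_nonneg _
  have ht1 : t ≤ 1 := by
    rw [ht, hφ]
    have := norm_integral_le_of_norm_le_const (μ := P1) (f := e1) (C := 1)
      (Filter.Eventually.of_forall fun y => by simp [he1abs y])
    simpa using this
  set M : ℝ := a ^ 2 * t + (1 - a ^ 2) with hM
  have hM0 : 0 ≤ M := by nlinarith
  -- ae membership facts
  have haeS1 : ∀ᵐ x ∂P0, x ∈ S1 := (mem_ae_iff_prob_eq_one hS1meas).2 hS1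
  have haeS2 : ∀ᵐ y ∂P1, y ∈ S2 := (mem_ae_iff_prob_eq_one hS2meas).2 hS2
  -- Step 1: every element of the set is ≤ M
  have hstep1 : ∀ c ∈ {c : ℝ | ∃ h : S → ℂ, Measurable h ∧ (∀ z, ‖h z‖ ≤ 1) ∧
      c = essSup (fun x => ‖
          ∫ y, (∫ z, h z * Complex.exp (u * g2 z * Complex.I) ∂(Q2 y)) *
            Complex.exp (u * g1 y * Complex.I) ∂(Q1 x)‖) P0}, c ≤ M := by
    rintro c ⟨h, hm, hb1', rfl⟩
    set e2 : S → ℂ := fun z => Complex.exp (u * g2 z * Complex.I) with he2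
    have he2m : Measurable e2 :=
      Complex.measurable_exp.comp
        (((Complex.measurable_ofReal.comp hg2).const_mul (u : ℂ)).mul_const Complex.I)
    have he2abs : ∀ z, ‖e2 z‖ = 1 := fun z => by
      have : (u : ℂ) * (g2 z : ℂ) * Complex.I = ((u * g2 z : ℝ) : ℂ) * Complex.I := by
        push_cast; ring
      rw [he2]; simp only [this]
      exact Complex.norm_exp_ofReal_mul_I _
    set E2 : S → ℂ := fun z => h z * e2 z with hE2
    have hE2m : Measurable E2 := hm.mul he2m
    have hE2b : ∀ z, ‖E2 z‖ ≤ 1 := fun z => by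
      rw [hE2]; simp only [norm_mul, he2abs z, mul_one]; exact hb1' z
    set H : S → ℂ := fun y => ∫ z, E2 z ∂(Q2 y) with hH
    have hHm : Measurable H := by
      have : StronglyMeasurable (fun y => ∫ z, (fun (_ : S) (z : S) => E2 z) y z ∂(Q2 y)) :=
        StronglyMeasurable.integral_kernel_prod_right
          (hE2m.comp measurable_snd).stronglyMeasurable
      exact this.measurable
    have hHb : ∀ y, ‖H y‖ ≤ 1 := fun y => by
      have := norm_integral_le_of_norm_le_const (μ := Q2 y) (f := E2) (C := 1)
        (Filter.Eventually.of_forall fun z => by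
          simpa using hE2b z)
      simpa using this
    set c₀ : ℂ := ∫ z, E2 z ∂P2 with hc₀
    have hc₀b : ‖c₀‖ ≤ 1 := by
      have := norm_integral_le_of_norm_le_const (μ := P2) (f := E2) (C := 1)
        (Filter.Eventually.of_forall fun z => by
          simpa using hE2b z)
      simpa using this
    -- inner estimate: on S2 we have |H y - a c₀| ≤ 1 - a
    have hHS2 : ∀ y ∈ S2, ‖H y - (a : ℂ) * c₀‖ ≤ 1 - a := fun y hy =>
      abs_integral_sub_le ha.le (fun A hA => (hdom2 y hy A hA).1) hE2m hE2b
    set G : S → ℂ := fun y => H y * e1 y with hG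
    have hGm : Measurable G := hHm.mul he1m
    have hGb : ∀ y, ‖G y‖ ≤ 1 := fun y => by
      rw [hG]; simp only [norm_mul, he1abs y, mul_one]; exact hHb y
    -- |∫ G dP1| ≤ a |c₀| t + (1 - a)
    have hinner : ‖∫ y, G y ∂P1‖ ≤ a * ‖c₀‖ * t + (1 - a) := by
      have hintG : Integrable G P1 := integrable_of_bdd hGm.aestronglyMeasurable hGb
      have hintc : Integrable (fun y => (a : ℂ) * c₀ * e1 y) P1 :=
        integrable_of_bdd (measurable_const.mul he1m).aestronglyMeasurable
          (C := ‖(a : ℂ) * c₀‖) (fun y => by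
            rw [norm_mul, he1abs y, mul_one])
      have hsplit : ∫ y, G y ∂P1 =
          (a : ℂ) * c₀ * φ + ∫ y, (H y - (a : ℂ) * c₀) * e1 y ∂P1 := by
        have heq : ∀ y, (H y - (a : ℂ) * c₀) * e1 y = G y - (a : ℂ) * c₀ * e1 y := fun y => by
          rw [hG]; ring
        rw [show (∫ y, (H y - (a : ℂ) * c₀) * e1 y ∂P1)
            = ∫ y, (G y - (a : ℂ) * c₀ * e1 y) ∂P1 from by simp_rw [heq]]
        rw [integral_sub hintG hintc, integral_const_mul, hφ]
        ring
      have hrest : ‖∫ y, (H y - (a : ℂ) * c₀) * e1 y ∂P1‖ ≤ 1 - a := by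
        have := norm_integral_le_of_norm_le_const (μ := P1)
          (f := fun y => (H y - (a : ℂ) * c₀) * e1 y) (C := 1 - a)
          (haeS2.mono fun y hy => by
            rw [norm_mul, he1abs y, mul_one]
            exact hHS2 y hy)
        simpa using this
      calc ‖∫ y, G y ∂P1‖
          ≤ ‖(a : ℂ) * c₀ * φ‖
            + ‖∫ y, (H y - (a : ℂ) * c₀) * e1 y ∂P1‖ := by
            rw [hsplit]; exact norm_add_le _ _
        _ ≤ a * ‖c₀‖ * t + (1 - a) := by
            refine add_le_add (le_of_eq ?_) hrest
            rw [norm_mul, norm_mul, Complex.norm_real, Real.norm_eq_abs, abs_of_nonneg ha.le, ht]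
    -- outer estimate: for x ∈ S1, |∫ G dQ1(x)| ≤ M
    have houter : ∀ x ∈ S1, ‖∫ y, G y ∂(Q1 x)‖ ≤ M := by
      intro x hx
      have h1 : ‖∫ y, G y ∂(Q1 x) - (a : ℂ) * ∫ y, G y ∂P1‖ ≤ 1 - a :=
        abs_integral_sub_le ha.le (fun A hA => (hdom1 x hx A hA).1) hGm hGb
      have h2 : ‖∫ y, G y ∂(Q1 x)‖
          ≤ ‖∫ y, G y ∂(Q1 x) - (a : ℂ) * ∫ y, G y ∂P1‖
            + ‖(a : ℂ) * ∫ y, G y ∂P1‖ := by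
        have := norm_add_le (∫ y, G y ∂(Q1 x) - (a : ℂ) * ∫ y, G y ∂P1)
          ((a : ℂ) * ∫ y, G y ∂P1)
        simpa using this
      have h3 : ‖(a : ℂ) * ∫ y, G y ∂P1‖
          ≤ a * (a * ‖c₀‖ * t + (1 - a)) := by
        rw [norm_mul, Complex.norm_real, Real.norm_eq_abs, abs_of_nonneg ha.le]
        exact mul_le_mul_of_nonneg_left hinner ha.le
      have hcab : ‖c₀‖ ≤ 1 := hc₀b
      have hc0nn : 0 ≤ ‖c₀‖ := norm_nonneg _
      rw [hM]
      nlinarith [mul_le_mul_of_nonneg_left (mul_le_mul_of_nonneg_right hcab ht0)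
        (mul_nonneg ha.le ha.le)]
    -- conclude via essSup
    have hfun : (fun x => ‖
        ∫ y, (∫ z, h z * Complex.exp (u * g2 z * Complex.I) ∂(Q2 y)) *
          Complex.exp (u * g1 y * Complex.I) ∂(Q1 x)‖)
        = fun x => ‖∫ y, G y ∂(Q1 x)‖ := rfl
    rw [hfun]
    have hne : (ae P0).NeBot := ae_neBot.2 (IsProbabilityMeasure.ne_zero P0)
    refine Filter.limsup_le_of_le
      (Filter.isCoboundedUnder_le_of_le _ fun x => norm_nonneg _) ?_
    exact haeS1.mono fun x hx => houter x hx
  -- the set is nonempty (0 belongs) and bounded above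
  have h0mem : (0 : ℝ) ∈ {c : ℝ | ∃ h : S → ℂ, Measurable h ∧ (∀ z, ‖h z‖ ≤ 1) ∧
      c = essSup (fun x => ‖
          ∫ y, (∫ z, h z * Complex.exp (u * g2 z * Complex.I) ∂(Q2 y)) *
            Complex.exp (u * g1 y * Complex.I) ∂(Q1 x)‖) P0} := by
    refine ⟨fun _ => 0, measurable_const, fun z => by simp, ?_⟩
    have : (fun x => ‖
        ∫ y, (∫ z, (0 : ℂ) * Complex.exp (u * g2 z * Complex.I) ∂(Q2 y)) *
          Complex.exp (u * g1 y * Complex.I) ∂(Q1 x)‖) = fun _ => (0 : ℝ) := by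
      funext x; simp
    rw [this, essSup_const _ (IsProbabilityMeasure.ne_zero P0)]
  have hbdd : BddAbove {c : ℝ | ∃ h : S → ℂ, Measurable h ∧ (∀ z, ‖h z‖ ≤ 1) ∧
      c = essSup (fun x => ‖
          ∫ y, (∫ z, h z * Complex.exp (u * g2 z * Complex.I) ∂(Q2 y)) *
            Complex.exp (u * g1 y * Complex.I) ∂(Q1 x)‖) P0} := ⟨M, hstep1⟩
  have hsup_le : sSup {c : ℝ | ∃ h : S → ℂ, Measurable h ∧ (∀ z, ‖h z‖ ≤ 1) ∧
      c = essSup (fun x => ‖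
          ∫ y, (∫ z, h z * Complex.exp (u * g2 z * Complex.I) ∂(Q2 y)) *
            Complex.exp (u * g1 y * Complex.I) ∂(Q1 x)‖) P0} ≤ M :=
    Real.sSup_le hstep1 hM0
  have hsup_nn : (0 : ℝ) ≤ sSup {c : ℝ | ∃ h : S → ℂ, Measurable h ∧
      (∀ z, ‖h z‖ ≤ 1) ∧
      c = essSup (fun x => ‖
          ∫ y, (∫ z, h z * Complex.exp (u * g2 z * Complex.I) ∂(Q2 y)) *
            Complex.exp (u * g1 y * Complex.I) ∂(Q1 x)‖) P0} :=
    le_csSup hbdd h0mem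
  have hsq : (sSup {c : ℝ | ∃ h : S → ℂ, Measurable h ∧ (∀ z, ‖h z‖ ≤ 1) ∧
      c = essSup (fun x => ‖
          ∫ y, (∫ z, h z * Complex.exp (u * g2 z * Complex.I) ∂(Q2 y)) *
            Complex.exp (u * g1 y * Complex.I) ∂(Q1 x)‖) P0}) ^ 2 ≤ M ^ 2 := by
    exact pow_le_pow_left₀ hsup_nn hsup_le 2
  refine hsq.trans ?_
  -- final algebra: (a² t + 1 - a²)² ≤ 1 - (a⁴/b)/2 (1 - t²)
  have hb0 : (0 : ℝ) < b := lt_of_lt_of_le one_pos hb1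
  set γ : ℝ := a ^ 4 / b with hγ
  have hγ0 : 0 ≤ γ := by positivity
  have hγa : γ ≤ a ^ 4 := by
    rw [hγ]
    calc a ^ 4 / b ≤ a ^ 4 / 1 := by
          exact div_le_div_of_nonneg_left (by positivity) one_pos hb1
      _ = a ^ 4 := div_one _
  rw [hM, ht]
  have haa : a ^ 2 ≤ 1 := by nlinarith
  have ha2 : a ^ 4 ≤ a ^ 2 := by nlinarith [mul_nonneg (sq_nonneg a) (sub_nonneg.2 haa)]
  have hs0 : 0 ≤ 1 - t := sub_nonneg.2 ht1
  have hs2 : (1 - t) ^ 2 ≤ 1 - t := by nlinarith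
  have h1 : γ / 2 * (1 - t ^ 2) ≤ γ * (1 - t) := by
    nlinarith [mul_nonneg hγ0 (sq_nonneg (1 - t))]
  have h2 : γ * (1 - t) ≤ a ^ 4 * (1 - t) := mul_le_mul_of_nonneg_right hγa hs0
  have h3a : a ^ 4 * (1 - t) ≤ a ^ 2 * (1 - t) := mul_le_mul_of_nonneg_right ha2 hs0
  have h3b : a ^ 4 * (1 - t) ^ 2 ≤ a ^ 2 * (1 - t) := by
    calc a ^ 4 * (1 - t) ^ 2 ≤ a ^ 4 * (1 - t) :=
          mul_le_mul_of_nonneg_left hs2 (by positivity)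
      _ ≤ a ^ 2 * (1 - t) := h3a
  nlinarith [h1, h2, h3a, h3b]
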